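/- Let G be a simple graph on a finite vertex type V, let k ≥ 1, and suppose no k-element subset of V is a dominating set of G. If S and T are k-element subsets of V such that S ∪ T is NOT a dominating set of G, then the distance between S and T in the reduction graph G' is exactly 2 when S ≠ T (and 0 when S = T). -/

import Mathlib

/-- `S` dominates `v` in `G` if `v ∈ S` or some element of `S` is adjacent to `v`. -/
def SimpleGraph.DominatesVert {V : Type*} (G : SimpleGraph V) (S : Finset V) (v : V) : Prop :=
  v ∈ S ∨ ∃ u ∈ S, G.Adj u v

/-- `S` is a dominating set of `G` if it dominates every vertex. -/
def SimpleGraph.IsDominatingSet {V : Type*} (G : SimpleGraph V) (S : Finset V) : Prop :=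
  ∀ v : V, G.DominatesVert S v

/-- The dominating-set-to-diameter reduction graph `G'`: its vertices are the `k`-element
subsets of `V` together with the elements of `V`; the elements of `V` form a clique; a
`k`-subset `S` is adjacent to a vertex `v ∈ V` iff `S` does not dominate `v`; two `k`-subsets
are never adjacent. -/
def SimpleGraph.reductionGraph {V : Type*} (G : SimpleGraph V) (k : ℕ) :
    SimpleGraph ({A : Finset V // A.card = k} ⊕ V) where
  Adj x y :=
    match x, y with
    | Sum.inl _, Sum.inl _ => False
    | Sum.inl S, Sum.inr v => ¬ G.DominatesVert S.1 v
    | Sum.inr v, Sum.inl S => ¬ G.DominatesVert S.1 v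
    | Sum.inr u, Sum.inr v => u ≠ v
  symm := by
    constructor
    rintro (S | u) (T | v) hadj
    · exact hadj
    · exact hadj
    · exact hadj
    · exact hadj.symm
  loopless := by
    constructor
    rintro (S | u) hadj
    · exact hadj
    · exact hadj rfl

/-- If no `k`-element subset of `V` is a dominating set of `G`, and `S`, `T` are `k`-element
subsets whose union is NOT a dominating set of `G`, then the distance between `S` and `T` in
the reduction graph `G'` is exactly `2` when `S ≠ T` (and `0` when `S = T`). -/
theorem reduction_dist_eq_two_of_union_not_dominating {V : Type*} [Fintype V] [DecidableEq V]
    (G : SimpleGraph V) (k : ℕ) (hk : 1 ≤ k)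
    (hno : ∀ A : Finset V, A.card = k → ¬ G.IsDominatingSet A)
    (S T : Finset V) (hS : S.card = k) (hT : T.card = k)
    (hdom : ¬ G.IsDominatingSet (S ∪ T)) :
    (S ≠ T → (G.reductionGraph k).dist (Sum.inl ⟨S, hS⟩) (Sum.inl ⟨T, hT⟩) = 2) ∧
      (S = T → (G.reductionGraph k).dist (Sum.inl ⟨S, hS⟩) (Sum.inl ⟨T, hT⟩) = 0) := by
  simp only [SimpleGraph.IsDominatingSet, not_forall] at hdom
  obtain ⟨v, hv⟩ := hdom
  have hSv : ¬ G.DominatesVert S v := by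
    intro h
    exact hv (h.elim (fun h => Or.inl (Finset.mem_union_left _ h))
      (fun ⟨u, hu, ha⟩ => Or.inr ⟨u, Finset.mem_union_left _ hu, ha⟩))
  have hTv : ¬ G.DominatesVert T v := by
    intro h
    exact hv (h.elim (fun h => Or.inl (Finset.mem_union_right _ h))
      (fun ⟨u, hu, ha⟩ => Or.inr ⟨u, Finset.mem_union_right _ hu, ha⟩))
  have hadj1 : (G.reductionGraph k).Adj (Sum.inl ⟨S, hS⟩) (Sum.inr v) := hSv
  have hadj2 : (G.reductionGraph k).Adj (Sum.inr v) (Sum.inl ⟨T, hT⟩) := hTv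
  constructor
  · intro hne
    have hne' : (Sum.inl ⟨S, hS⟩ : {A : Finset V // A.card = k} ⊕ V) ≠ Sum.inl ⟨T, hT⟩ := by
      simp [Subtype.ext_iff]; exact hne
    have hle : (G.reductionGraph k).dist (Sum.inl ⟨S, hS⟩) (Sum.inl ⟨T, hT⟩) ≤ 2 := by
      have := SimpleGraph.dist_le ((hadj1.toWalk.append hadj2.toWalk))
      simpa using this
    have h0 : (G.reductionGraph k).dist (Sum.inl ⟨S, hS⟩) (Sum.inl ⟨T, hT⟩) ≠ 0 := by
      intro h
      rw [SimpleGraph.dist_eq_zero_iff_eq_or_not_reachable] at h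
      exact h.elim (fun h => hne' h) (fun h => h ⟨hadj1.toWalk.append hadj2.toWalk⟩)
    have h1 : (G.reductionGraph k).dist (Sum.inl ⟨S, hS⟩) (Sum.inl ⟨T, hT⟩) ≠ 1 := by
      intro h
      rw [SimpleGraph.dist_eq_one_iff_adj] at h
      exact h
    omega
  · intro heq
    subst heq
    simp [SimpleGraph.dist_self]
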